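/- The linearly ordered set ([0,1]^{<ω₁}_{↘0}, <_altlex) contains no subset of order type ω₁* (i.e., no strictly decreasing ω₁-sequence). -/

import Mathlib

open Ordinal Set

noncomputable section

/-- Parity of an ordinal: `a = γ + n` with `γ` limit, `n < ω`; even iff `n` is even. -/
def OrdEven (a : Ordinal) : Prop := a % 2 = 0

/-- Upper semicontinuity. -/
def USC {X : Type} [TopologicalSpace X] (f : X → ℝ) : Prop :=
  ∀ r : ℝ, IsOpen (f ⁻¹' Set.Iio r)

/-- The least ordinal where two transfinite sequences differ. -/
def dOrd (f g : Ordinal → ℝ) : Ordinal := sInf {a | f a ≠ g a}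

/-- The alternating lexicographical order on transfinite sequences of reals. -/
def AltLex (f g : Ordinal → ℝ) : Prop :=
  f ≠ g ∧ ((OrdEven (dOrd f g) ∧ f (dOrd f g) < g (dOrd f g)) ∨
    (¬ OrdEven (dOrd f g) ∧ g (dOrd f g) < f (dOrd f g)))

/-- `f` encodes a strictly decreasing countable transfinite sequence in `[0,1]`
with last element `0` at index `ξ` (padded with `0` beyond `ξ`). -/
def IsDSeqLen (f : Ordinal → ℝ) (ξ : Ordinal) : Prop :=
  ξ < (Cardinal.aleph 1).ord ∧ (∀ a, f a ∈ Set.Icc (0:ℝ) 1) ∧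
  (∀ a b, a < b → b ≤ ξ → f b < f a) ∧ (∀ a, ξ ≤ a → f a = 0)

/-- Membership in `[0,1]^{<ω₁}_{↘0}`. -/
def IsDSeq (f : Ordinal → ℝ) : Prop := ∃ ξ, IsDSeqLen f ξ

/-- The ordinal `ω₁`. -/
abbrev om1 : Ordinal := (Cardinal.aleph 1).ord

lemma om1_isLimit : Order.IsSuccLimit om1 :=
  Cardinal.isSuccLimit_ord (Cardinal.aleph0_le_aleph 1)

lemma lt_succ_self_ord (t : Ordinal) : t < t + 1 := by
  rw [Ordinal.add_one_eq_succ]; exact Order.lt_succ t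

lemma succ_lt_om1 {t : Ordinal} (ht : t < om1) : t + 1 < om1 := by
  rw [Ordinal.add_one_eq_succ]; exact om1_isLimit.succ_lt ht

/-- A subset of ℝ in which every nonempty subset has a greatest element is countable. -/
lemma rev_wo_countable (V : Set ℝ)
    (hmax : ∀ W : Set ℝ, W ⊆ V → W.Nonempty → ∃ m ∈ W, ∀ w ∈ W, w ≤ m) :
    V.Countable := by
  classical
  have key : ∀ v, v ∈ V → (∃ w ∈ V, w < v) →
      ∃ q : ℚ, (q : ℝ) < v ∧ ∀ w ∈ V, w < v → w < q := by
    intro v hv hex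
    obtain ⟨m, hm, hmx⟩ := hmax {w | w ∈ V ∧ w < v} (fun w h => h.1)
      (by obtain ⟨w, h1, h2⟩ := hex; exact ⟨w, h1, h2⟩)
    obtain ⟨q, hq1, hq2⟩ := exists_rat_btwn hm.2
    exact ⟨q, hq2, fun w hw hwv => lt_of_le_of_lt (hmx w ⟨hw, hwv⟩) hq1⟩
  set f : ℝ → Option ℚ := fun v =>
    if h : v ∈ V ∧ ∃ w ∈ V, w < v then some (key v h.1 h.2).choose else none with hf
  have hinj : Set.InjOn f V := by
    have main : ∀ v₁, v₁ ∈ V → ∀ v₂, v₂ ∈ V → v₁ < v₂ → f v₁ ≠ f v₂ := by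
      intro v₁ h₁ v₂ h₂ hlt
      have hex₂ : v₂ ∈ V ∧ ∃ w ∈ V, w < v₂ := ⟨h₂, v₁, h₁, hlt⟩
      have hf₂ : f v₂ = some (key v₂ hex₂.1 hex₂.2).choose := dif_pos hex₂
      have hq₂ := (key v₂ hex₂.1 hex₂.2).choose_spec
      by_cases hex₁ : v₁ ∈ V ∧ ∃ w ∈ V, w < v₁
      · have hf₁ : f v₁ = some (key v₁ hex₁.1 hex₁.2).choose := dif_pos hex₁
        have hq₁ := (key v₁ hex₁.1 hex₁.2).choose_spec
        rw [hf₁, hf₂]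
        intro hc
        have hcq : (key v₁ hex₁.1 hex₁.2).choose = (key v₂ hex₂.1 hex₂.2).choose :=
          Option.some.inj hc
        have h1 : ((key v₁ hex₁.1 hex₁.2).choose : ℝ) < v₁ := hq₁.1
        have h2 : (v₁ : ℝ) < (key v₂ hex₂.1 hex₂.2).choose := hq₂.2 v₁ h₁ hlt
        rw [hcq] at h1
        exact absurd (h1.trans h2) (lt_irrefl _)
      · have hf₁ : f v₁ = none := dif_neg hex₁
        rw [hf₁, hf₂]; simp
    intro a ha b hb hab
    rcases lt_trichotomy a b with h | h | h
    · exact absurd hab (main a ha b hb h)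
    · exact h
    · exact absurd hab.symm (main b hb a ha h)
  have hc : Countable ↥V := (Set.injOn_iff_injective.mp hinj).countable
  exact Set.countable_coe_iff.mp hc

/-- A weakly decreasing real-valued function on the interval `[t₀, ω₁)` of ordinals is
eventually constant. -/
lemma stab (g : Ordinal → ℝ) (t₀ : Ordinal) (ht₀ : t₀ < om1)
    (hmono : ∀ a b, t₀ ≤ a → a ≤ b → b < om1 → g b ≤ g a) :
    ∃ t₁, t₀ ≤ t₁ ∧ t₁ < om1 ∧ ∀ a, t₁ ≤ a → a < om1 → g a = g t₁ := by
  classical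
  set V : Set ℝ := g '' (Set.Ico t₀ om1) with hV
  have hVne : V.Nonempty := ⟨g t₀, t₀, ⟨le_refl _, ht₀⟩, rfl⟩
  have hVc : V.Countable := by
    apply rev_wo_countable
    intro W hW hWne
    obtain ⟨w₀, hw₀⟩ := hWne
    obtain ⟨a₀, ha₀, rfl⟩ := hW hw₀
    set S : Set Ordinal := {a | t₀ ≤ a ∧ a < om1 ∧ g a ∈ W} with hS
    have hSne : S.Nonempty := ⟨a₀, ha₀.1, ha₀.2, hw₀⟩
    have hmem : sInf S ∈ S := csInf_mem hSne
    refine ⟨g (sInf S), hmem.2.2, ?_⟩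
    intro w hw
    obtain ⟨a, ha, rfl⟩ := hW hw
    have haS : a ∈ S := ⟨ha.1, ha.2, hw⟩
    exact hmono _ _ hmem.1 (csInf_le' haS) ha.2
  obtain ⟨e, he⟩ := hVc.exists_eq_range hVne
  set S : ℕ → Set Ordinal := fun n => {a | t₀ ≤ a ∧ a < om1 ∧ g a = e n} with hS
  set A : ℕ → Ordinal := fun n => if h : (S n).Nonempty then sInf (S n) else t₀ with hA
  have hA1 : ∀ n, t₀ ≤ A n ∧ A n < om1 := by
    intro n
    simp only [hA]
    split_ifs with h
    · have := csInf_mem h; exact ⟨this.1, this.2.1⟩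
    · exact ⟨le_refl _, ht₀⟩
  have hAg : ∀ n, (S n).Nonempty → g (A n) = e n := by
    intro n h
    simp only [hA]
    rw [dif_pos h]
    exact (csInf_mem h).2.2
  have hAt₁ : ∀ n, A n ≤ iSup A := Ordinal.le_iSup A
  have ht₀t₁ : t₀ ≤ iSup A := le_trans (hA1 0).1 (hAt₁ 0)
  have ht₁lt : iSup A < om1 := by
    apply Cardinal.iSup_lt_ord_lift_of_isRegular Cardinal.isRegular_aleph_one
    · rw [Cardinal.mk_nat, Cardinal.lift_aleph0]
      exact Cardinal.aleph0_lt_aleph_one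
    · exact fun n => (hA1 n).2
  set t₁ := iSup A with ht₁def
  refine ⟨t₁, ht₀t₁, ht₁lt, ?_⟩
  intro a hta ha
  have hgaV : g a ∈ V := ⟨a, ⟨le_trans ht₀t₁ hta, ha⟩, rfl⟩
  rw [he] at hgaV
  obtain ⟨n, hn⟩ := hgaV
  have hSn : (S n).Nonempty := ⟨a, le_trans ht₀t₁ hta, ha, hn.symm⟩
  have h1 : g (A n) = g a := (hAg n hSn).trans hn
  have h2 : g t₁ ≤ g (A n) := hmono _ _ (hA1 n).1 (hAt₁ n) ht₁lt
  have h3 : g a ≤ g t₁ := hmono _ _ ht₀t₁ hta ha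
  exact le_antisymm h3 (h1 ▸ h2)

lemma dOrd_eq {f g : Ordinal → ℝ} {γ : Ordinal} (hlt : ∀ β, β < γ → f β = g β)
    (hne : f γ ≠ g γ) : dOrd f g = γ := by
  unfold dOrd
  apply le_antisymm
  · exact csInf_le' hne
  · by_contra h
    push_neg at h
    have hmem : sInf {a | f a ≠ g a} ∈ {a | f a ≠ g a} := csInf_mem ⟨γ, hne⟩
    exact hmem (hlt _ h)

theorem stmt_4 :
    ¬ ∃ F : Ordinal → Ordinal → ℝ,
      (∀ a, a < (Cardinal.aleph 1).ord → IsDSeq (F a)) ∧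
      (∀ a b, a < b → b < (Cardinal.aleph 1).ord → AltLex (F b) (F a)) := by
  classical
  rintro ⟨F, hF1, hF2⟩
  have key : ∀ γ, γ < om1 → ∃ t, t < om1 ∧
      ∀ a b, t ≤ a → a ≤ b → b < om1 → ∀ β ≤ γ, F a β = F b β := by
    intro γ
    induction γ using Ordinal.induction with
    | h γ IH =>
    intro hγ
    have IH' : ∀ β, β < γ → ∃ t, t < om1 ∧ ∀ a b, t ≤ a → a ≤ b → b < om1 →
        ∀ β' ≤ β, F a β' = F b β' := fun β h => IH β h (h.trans hγ)
    choose T hT1 hT2 using IH'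
    have h1 : γ.card ≤ Cardinal.aleph0 := by
      have h2 := Cardinal.lt_ord.mp hγ
      rwa [← Cardinal.succ_aleph0, Order.lt_succ_iff] at h2
    have hcnt : (Set.Iio γ).Countable := by
      have h2 : Cardinal.mk (Set.Iio γ) ≤ Cardinal.aleph0 := by
        rw [Ordinal.mk_Iio_ordinal, Cardinal.lift_le_aleph0]
        exact h1
      exact Cardinal.le_aleph0_iff_set_countable.mp h2
    have hsup : ∃ t₀, t₀ < om1 ∧ ∀ β (h : β < γ), T β h ≤ t₀ := by
      rcases Set.eq_empty_or_nonempty (Set.Iio γ) with hemp | hne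
      · refine ⟨0, om1_isLimit.pos, ?_⟩
        intro β h
        exact absurd (Set.mem_Iio.mpr h) (hemp ▸ Set.notMem_empty β)
      · obtain ⟨e, he⟩ := hcnt.exists_eq_range hne
        have heγ : ∀ n, e n < γ := by
          intro n
          have h3 : e n ∈ Set.Iio γ := he ▸ Set.mem_range_self n
          exact h3
        refine ⟨iSup (fun n => T (e n) (heγ n)), ?_, ?_⟩
        · apply Cardinal.iSup_lt_ord_lift_of_isRegular Cardinal.isRegular_aleph_one
          · rw [Cardinal.mk_nat, Cardinal.lift_aleph0]
            exact Cardinal.aleph0_lt_aleph_one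
          · exact fun n => hT1 (e n) (heγ n)
        · intro β h
          have hβm : β ∈ Set.range e := he ▸ Set.mem_Iio.mpr h
          obtain ⟨n, rfl⟩ := hβm
          exact Ordinal.le_iSup (fun n => T (e n) (heγ n)) n
    obtain ⟨t₀, ht₀, ht₀le⟩ := hsup
    have hagree : ∀ a b, t₀ ≤ a → a ≤ b → b < om1 → ∀ β, β < γ → F a β = F b β := by
      intro a b hta hab hb β hβ
      exact hT2 β hβ a b (le_trans (ht₀le β hβ) hta) hab hb β le_rfl
    have hdir : ∀ a b, t₀ ≤ a → a < b → b < om1 → F a γ ≠ F b γ →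
        ((OrdEven γ → F b γ < F a γ) ∧ (¬ OrdEven γ → F a γ < F b γ)) := by
      intro a b hta hab hb hne
      have halt : AltLex (F b) (F a) := hF2 a b hab hb
      have hd : dOrd (F b) (F a) = γ :=
        dOrd_eq (fun β hβ => (hagree a b hta hab.le hb β hβ).symm) (Ne.symm hne)
      rcases halt.2 with ⟨he, hlt⟩ | ⟨he, hlt⟩
      · rw [hd] at he hlt
        exact ⟨fun _ => hlt, fun h => absurd he h⟩
      · rw [hd] at he hlt
        exact ⟨fun h => absurd h he, fun _ => hlt⟩
    by_cases hev : OrdEven γ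
    · have hmono : ∀ a b, t₀ ≤ a → a ≤ b → b < om1 →
          (fun a => F a γ) b ≤ (fun a => F a γ) a := by
        intro a b hta hab hb
        rcases eq_or_lt_of_le hab with rfl | h
        · exact le_refl _
        · by_cases hne : F a γ = F b γ
          · exact le_of_eq hne.symm
          · exact ((hdir a b hta h hb hne).1 hev).le
      obtain ⟨t₁, h1, h2, h3⟩ := stab (fun a => F a γ) t₀ ht₀ hmono
      refine ⟨t₁, h2, ?_⟩
      intro a b hta hab hb β hβ
      rcases lt_or_eq_of_le hβ with h | rfl
      · exact hagree a b (le_trans h1 hta) hab hb β h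
      · exact (h3 a hta (lt_of_le_of_lt hab hb)).trans (h3 b (le_trans hta hab) hb).symm
    · have hmono : ∀ a b, t₀ ≤ a → a ≤ b → b < om1 →
          (fun a => -(F a γ)) b ≤ (fun a => -(F a γ)) a := by
        intro a b hta hab hb
        simp only
        rcases eq_or_lt_of_le hab with rfl | h
        · exact le_refl _
        · by_cases hne : F a γ = F b γ
          · rw [hne]
          · exact neg_le_neg ((hdir a b hta h hb hne).2 hev).le
      obtain ⟨t₁, h1, h2, h3⟩ := stab (fun a => -(F a γ)) t₀ ht₀ hmono
      refine ⟨t₁, h2, ?_⟩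
      intro a b hta hab hb β hβ
      rcases lt_or_eq_of_le hβ with h | rfl
      · exact hagree a b (le_trans h1 hta) hab hb β h
      · have h4 := (h3 a hta (lt_of_le_of_lt hab hb)).trans (h3 b (le_trans hta hab) hb).symm
        exact neg_injective h4
  choose T hT1 hT2 using key
  have hstable : ∀ γ (h : γ < om1), ∀ a, T γ h ≤ a → a < om1 → F a γ = F (T γ h) γ := by
    intro γ h a hta ha
    exact (hT2 γ h (T γ h) a le_rfl hta ha γ le_rfl).symm
  by_cases hzero : ∃ γ, ∃ h : γ < om1, F (T γ h) γ = 0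
  · obtain ⟨γ₀, h₀, hr0⟩ := hzero
    set t := T γ₀ h₀ with htdef
    have ht : t < om1 := hT1 γ₀ h₀
    have hsucc : t + 1 < om1 := succ_lt_om1 ht
    have hlt1 : t < t + 1 := lt_succ_self_ord t
    have hzero_at : ∀ a, a < om1 → F a γ₀ = 0 → ∀ β, γ₀ < β → F a β = 0 := by
      intro a ha h0 β hβ
      obtain ⟨ξ, hξ1, hξ2, hξ3, hξ4⟩ := hF1 a ha
      have hξγ : ξ ≤ γ₀ := by
        by_contra hc
        push_neg at hc
        have h5 := hξ3 γ₀ ξ hc le_rfl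
        rw [h0, hξ4 ξ le_rfl] at h5
        exact lt_irrefl _ h5
      exact hξ4 β (le_trans hξγ hβ.le)
    have heq : F t = F (t + 1) := by
      funext β
      by_cases hβ : β ≤ γ₀
      · exact hT2 γ₀ h₀ t (t + 1) le_rfl hlt1.le hsucc β hβ
      · push_neg at hβ
        have h1 : F t β = 0 := hzero_at t ht hr0 β hβ
        have h2 : F (t + 1) β = 0 := by
          apply hzero_at _ hsucc _ β hβ
          rw [hstable γ₀ h₀ (t + 1) hlt1.le hsucc]
          exact hr0
        rw [h1, h2]
    exact (hF2 t (t + 1) hlt1 hsucc).1 heq.symm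
  · push_neg at hzero
    set r : Ordinal → ℝ := fun γ => if h : γ < om1 then F (T γ h) γ else 0 with hr
    have hstrict : ∀ γ γ', γ < γ' → γ' < om1 → r γ' < r γ := by
      intro γ γ' hlt h'
      have h : γ < om1 := hlt.trans h'
      set a := max (T γ h) (T γ' h') with hadef
      have ha : a < om1 := max_lt (hT1 γ h) (hT1 γ' h')
      have e1 : F a γ = r γ := by
        simp only [hr]
        rw [dif_pos h]
        exact hstable γ h a (le_max_left _ _) ha
      have e2 : F a γ' = r γ' := by
        simp only [hr]
        rw [dif_pos h']
        exact hstable γ' h' a (le_max_right _ _) ha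
      obtain ⟨ξ, hξ1, hξ2, hξ3, hξ4⟩ := hF1 a ha
      have hne : F a γ' ≠ 0 := by
        rw [e2]
        simp only [hr]
        rw [dif_pos h']
        exact hzero γ' h'
      have hξ : γ' ≤ ξ := by
        by_contra hc
        push_neg at hc
        exact hne (hξ4 γ' hc.le)
      have h5 := hξ3 γ γ' hlt hξ
      rw [e1, e2] at h5
      exact h5
    have hmono : ∀ a b, (0 : Ordinal) ≤ a → a ≤ b → b < om1 → r b ≤ r a := by
      intro a b _ hab hb
      rcases eq_or_lt_of_le hab with rfl | h
      · exact le_refl _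
      · exact (hstrict a b h hb).le
    obtain ⟨t₁, _, ht₁, h3⟩ := stab r 0 om1_isLimit.pos hmono
    have h4 : t₁ + 1 < om1 := succ_lt_om1 ht₁
    have h5 := hstrict t₁ (t₁ + 1) (lt_succ_self_ord t₁) h4
    rw [h3 (t₁ + 1) (lt_succ_self_ord t₁).le h4] at h5
    exact lt_irrefl _ h5
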